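/- Faces of a face of a polytope are obtained by small perturbations of the normal vector: if K ⊆ ℝ^n is the convex hull of a nonempty finite set and ξ, η ∈ ℝ^n, then there exists t₀ > 0 such that for all t with 0 < t ≤ t₀, one has K^{ξ + tη} = (K^ξ)^η. -/

import Mathlib

open scoped Pointwise RealInnerProductSpace BigOperators

noncomputable section

/-- The face of a set `K` in direction `ξ`: points of `K` maximizing `⟪·, ξ⟫`. -/
def face {n : ℕ} (K : Set (EuclideanSpace ℝ (Fin n))) (ξ : EuclideanSpace ℝ (Fin n)) :
    Set (EuclideanSpace ℝ (Fin n)) :=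
  {x ∈ K | ∀ y ∈ K, ⟪y, ξ⟫ ≤ ⟪x, ξ⟫}

/-- The `i`-th standard basis vector of `ℝⁿ`. -/
def stdVec (n : ℕ) (i : Fin n) : EuclideanSpace ℝ (Fin n) := EuclideanSpace.single i 1

/-- The all-ones vector `S = (1,…,1)`. -/
def allOnes (n : ℕ) : EuclideanSpace ℝ (Fin n) := WithLp.toLp 2 (fun _ => (1 : ℝ))

/-- The segment `q_{ij} = [e_i, e_j]`. -/
def qseg (n : ℕ) (i j : Fin n) : Set (EuclideanSpace ℝ (Fin n)) :=
  segment ℝ (stdVec n i) (stdVec n j)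

/-- The point `R_i = n·e_i − Σ_j e_j` (coordinate `n−1` at position `i`, `−1` elsewhere). -/
def Rpt (n : ℕ) (i : Fin n) : EuclideanSpace ℝ (Fin n) := (n : ℝ) • stdVec n i - allOnes n

/-- The segment `r_i = [0, R_i]`. -/
def rseg (n : ℕ) (i : Fin n) : Set (EuclideanSpace ℝ (Fin n)) := segment ℝ 0 (Rpt n i)

/-- The standard permutohedron `Π_n`: the convex hull of all points obtained by
permuting the coordinates of `(1, 2, …, n)`. -/
def permutohedron (n : ℕ) : Set (EuclideanSpace ℝ (Fin n)) :=
  convexHull ℝ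
    {x : EuclideanSpace ℝ (Fin n) | ∃ σ : Equiv.Perm (Fin n), ∀ i, x i = ((σ i : ℕ) : ℝ) + 1}

lemma inner_left_linear {n : ℕ} (ζ : EuclideanSpace ℝ (Fin n)) :
    IsLinearMap ℝ (fun y : EuclideanSpace ℝ (Fin n) => ⟪y, ζ⟫) :=
  ⟨fun x y => inner_add_left x y ζ, fun c x => real_inner_smul_left x ζ c⟩

lemma face_hull {n : ℕ} (V : Set (EuclideanSpace ℝ (Fin n))) (hVfin : V.Finite)
    (hVne : V.Nonempty) (ζ : EuclideanSpace ℝ (Fin n)) :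
    face (convexHull ℝ V) ζ = convexHull ℝ {v ∈ V | ∀ w ∈ V, ⟪w, ζ⟫ ≤ ⟪v, ζ⟫} := by
  classical
  obtain ⟨m, hmV, hm⟩ := Set.exists_max_image V (fun y => ⟪y, ζ⟫) hVfin hVne
  have hlin := inner_left_linear (n := n) ζ
  have hub : ∀ y ∈ convexHull ℝ V, ⟪y, ζ⟫ ≤ ⟪m, ζ⟫ := fun y hy =>
    convexHull_min (fun v hv => hm v hv) (convex_halfSpace_le hlin _) hy
  apply Set.Subset.antisymm
  · rintro x ⟨hxK, hxmax⟩
    have hxM : ⟪x, ζ⟫ = ⟪m, ζ⟫ :=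
      le_antisymm (hub x hxK) (hxmax m (subset_convexHull ℝ V hmV))
    rw [hVfin.convexHull_eq] at hxK
    obtain ⟨w, hw0, hw1, hwx⟩ := hxK
    set F := hVfin.toFinset with hF
    have hval : ⟪x, ζ⟫ = ∑ v ∈ F, w v * ⟪v, ζ⟫ := by
      rw [← hwx, Finset.centerMass_eq_of_sum_1 _ _ hw1, sum_inner]
      simp [real_inner_smul_left, Finset.mul_sum, mul_assoc]
    have hzero : ∑ v ∈ F, w v * (⟪m, ζ⟫ - ⟪v, ζ⟫) = 0 := by
      simp only [mul_sub, Finset.sum_sub_distrib, ← Finset.sum_mul, hw1, one_mul, ← hval, hxM, sub_self]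
    have hterm : ∀ v ∈ F, w v * (⟪m, ζ⟫ - ⟪v, ζ⟫) = 0 := by
      refine (Finset.sum_eq_zero_iff_of_nonneg ?_).mp hzero
      intro v hv
      have hvV : v ∈ V := hVfin.mem_toFinset.mp hv
      exact mul_nonneg (hw0 v hvV) (sub_nonneg.mpr (hm v hvV))
    rw [← hwx, ← Finset.centerMass_filter_ne_zero]
    apply Finset.centerMass_mem_convexHull
    · intro v hv
      exact hw0 v (hVfin.mem_toFinset.mp (Finset.mem_filter.mp hv).1)
    · rw [Finset.sum_filter_ne_zero, hw1]; exact one_pos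
    · intro v hv
      obtain ⟨hvF, hvne⟩ := Finset.mem_filter.mp hv
      have hvV : v ∈ V := hVfin.mem_toFinset.mp hvF
      have := hterm v hvF
      rcases mul_eq_zero.mp this with h | h
      · exact absurd h hvne
      · have hvM : ⟪v, ζ⟫ = ⟪m, ζ⟫ := by linarith [sub_eq_zero.mp h]
        exact ⟨hvV, fun u huV => hvM ▸ hm u huV⟩
  · intro x hx
    have hBV : {v ∈ V | ∀ w ∈ V, ⟪w, ζ⟫ ≤ ⟪v, ζ⟫} ⊆ V := fun v hv => hv.1
    refine ⟨convexHull_mono hBV hx, fun y hy => ?_⟩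
    have hxge : ⟪m, ζ⟫ ≤ ⟪x, ζ⟫ :=
      convexHull_min (fun v hv => hv.2 m hmV) (convex_halfSpace_ge hlin _) hx
    exact le_trans (hub y hy) hxge

/-- Faces of a face of a polytope are obtained by small perturbations of the
normal vector: `K^{ξ + tη} = (K^ξ)^η` for all sufficiently small `t > 0`. -/
theorem face_perturbation (n : ℕ) (V : Set (EuclideanSpace ℝ (Fin n)))
    (hVfin : V.Finite) (hVne : V.Nonempty)
    (K : Set (EuclideanSpace ℝ (Fin n))) (hK : K = convexHull ℝ V)
    (ξ η : EuclideanSpace ℝ (Fin n)) :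
    ∃ t₀ : ℝ, 0 < t₀ ∧ ∀ t : ℝ, 0 < t → t ≤ t₀ →
      face K (ξ + t • η) = face (face K ξ) η := by
  classical
  subst hK
  set A := {v ∈ V | ∀ w ∈ V, ⟪w, ξ⟫ ≤ ⟪v, ξ⟫} with hA
  obtain ⟨a, haV, ha⟩ := Set.exists_max_image V (fun y => ⟪y, ξ⟫) hVfin hVne
  have hAne : A.Nonempty := ⟨a, haV, ha⟩
  have hAfin : A.Finite := hVfin.subset (fun v hv => hv.1)
  have hAV : A ⊆ V := fun v hv => hv.1
  set B := {v ∈ A | ∀ w ∈ A, ⟪w, η⟫ ≤ ⟪v, η⟫} with hB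
  obtain ⟨b, hbA, hb⟩ := Set.exists_max_image A (fun y => ⟪y, η⟫) hAfin hAne
  have hbB : b ∈ B := ⟨hbA, hb⟩
  -- value of elements of A in direction ξ equals ⟪b, ξ⟫
  have hAval : ∀ v ∈ A, ⟪v, ξ⟫ = ⟪b, ξ⟫ :=
    fun v hv => le_antisymm (hbA.2 v hv.1) (hv.2 b (hAV hbA))
  have hltA : ∀ v ∈ V, v ∉ A → ⟪v, ξ⟫ < ⟪b, ξ⟫ := by
    intro v hvV hvA
    by_contra h
    exact hvA ⟨hvV, fun w hw => le_trans (hbA.2 w hw) (not_lt.mp h)⟩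
  set F := hVfin.toFinset with hF
  have hFne : F.Nonempty := by
    rwa [hF, Set.Finite.toFinset_nonempty]
  set g : EuclideanSpace ℝ (Fin n) → ℝ := fun v =>
    if v ∈ A then 1 else (⟪b, ξ⟫ - ⟪v, ξ⟫) / (|⟪v, η⟫ - ⟪b, η⟫| + 1) with hg
  have hgpos : ∀ v ∈ F, 0 < g v := by
    intro v hvF
    have hvV : v ∈ V := hVfin.mem_toFinset.mp hvF
    by_cases hvA : v ∈ A
    · simp [hg, hvA]
    · have hlt : ⟪v, ξ⟫ < ⟪b, ξ⟫ := hltA v hvV hvA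
      have : (0:ℝ) < |⟪v, η⟫ - ⟪b, η⟫| + 1 := by positivity
      simp only [hg, if_neg hvA]
      exact div_pos (by linarith) this
  refine ⟨F.inf' hFne g, (Finset.lt_inf'_iff hFne).mpr hgpos, ?_⟩
  intro t ht ht0
  -- key bound: for v ∈ V, ⟪v, ξ + t•η⟫ ≤ ⟪b, ξ + t•η⟫, strict if v ∉ A
  have hexp : ∀ v : EuclideanSpace ℝ (Fin n), ⟪v, ξ + t • η⟫ = ⟪v, ξ⟫ + t * ⟪v, η⟫ := by
    intro v; rw [inner_add_right, real_inner_smul_right]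
  have hub : ∀ v ∈ V, ⟪v, ξ + t • η⟫ ≤ ⟪b, ξ + t • η⟫ := by
    intro v hvV
    rw [hexp, hexp]
    by_cases hvA : v ∈ A
    · have h1 := hAval v hvA
      have h2 := hb v hvA
      nlinarith
    · have hvF : v ∈ F := hVfin.mem_toFinset.mpr hvV
      have hlt : ⟪v, ξ⟫ < ⟪b, ξ⟫ := hltA v hvV hvA
      have hgv : g v = (⟪b, ξ⟫ - ⟪v, ξ⟫) / (|⟪v, η⟫ - ⟪b, η⟫| + 1) := by
        simp [hg, hvA]
      have hden : (0:ℝ) < |⟪v, η⟫ - ⟪b, η⟫| + 1 := by positivity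
      have htg : t ≤ g v := le_trans ht0 (Finset.inf'_le g hvF)
      have key : t * (⟪v, η⟫ - ⟪b, η⟫) < ⟪b, ξ⟫ - ⟪v, ξ⟫ := by
        calc t * (⟪v, η⟫ - ⟪b, η⟫) ≤ t * |⟪v, η⟫ - ⟪b, η⟫| := by
              exact mul_le_mul_of_nonneg_left (le_abs_self _) ht.le
          _ < t * (|⟪v, η⟫ - ⟪b, η⟫| + 1) := by nlinarith
          _ ≤ g v * (|⟪v, η⟫ - ⟪b, η⟫| + 1) := by nlinarith
          _ = ⟪b, ξ⟫ - ⟪v, ξ⟫ := by rw [hgv]; field_simp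
      nlinarith
  have hmem : ∀ v ∈ V, ⟪b, ξ + t • η⟫ ≤ ⟪v, ξ + t • η⟫ → v ∈ B := by
    intro v hvV hge
    by_cases hvA : v ∈ A
    · refine ⟨hvA, fun w hwA => ?_⟩
      rw [hexp, hexp] at hge
      have h1 := hAval v hvA
      have h2 : ⟪b, η⟫ ≤ ⟪v, η⟫ := by nlinarith
      exact le_trans (hb w hwA) h2
    · exfalso
      have := hub v hvV
      -- but strict…
      rw [hexp, hexp] at hge
      have hvF : v ∈ F := hVfin.mem_toFinset.mpr hvV
      have hlt : ⟪v, ξ⟫ < ⟪b, ξ⟫ := hltA v hvV hvA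
      have hgv : g v = (⟪b, ξ⟫ - ⟪v, ξ⟫) / (|⟪v, η⟫ - ⟪b, η⟫| + 1) := by
        simp [hg, hvA]
      have hden : (0:ℝ) < |⟪v, η⟫ - ⟪b, η⟫| + 1 := by positivity
      have htg : t ≤ g v := le_trans ht0 (Finset.inf'_le g hvF)
      have key : t * (⟪v, η⟫ - ⟪b, η⟫) < ⟪b, ξ⟫ - ⟪v, ξ⟫ := by
        calc t * (⟪v, η⟫ - ⟪b, η⟫) ≤ t * |⟪v, η⟫ - ⟪b, η⟫| := by
              exact mul_le_mul_of_nonneg_left (le_abs_self _) ht.le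
          _ < t * (|⟪v, η⟫ - ⟪b, η⟫| + 1) := by nlinarith
          _ ≤ g v * (|⟪v, η⟫ - ⟪b, η⟫| + 1) := by nlinarith
          _ = ⟪b, ξ⟫ - ⟪v, ξ⟫ := by rw [hgv]; field_simp
      nlinarith
  -- the argmax set of ξ + t•η over V is B
  have hargmax : {v ∈ V | ∀ w ∈ V, ⟪w, ξ + t • η⟫ ≤ ⟪v, ξ + t • η⟫} = B := by
    apply Set.Subset.antisymm
    · rintro v ⟨hvV, hv⟩
      exact hmem v hvV (hv b (hAV hbA))
    · intro v hvB
      have hvV : v ∈ V := hAV hvB.1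
      have hval : ⟪v, ξ + t • η⟫ = ⟪b, ξ + t • η⟫ := by
        rw [hexp, hexp, hAval v hvB.1,
          le_antisymm (hb v hvB.1) (hvB.2 b hbA)]
      exact ⟨hvV, fun w hwV => hval ▸ hub w hwV⟩
  rw [face_hull V hVfin hVne (ξ + t • η), hargmax,
    face_hull V hVfin hVne ξ, ← hA, face_hull A hAfin hAne η, ← hB]
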